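/- arXiv:1805.12332 — 3 statements merged into one kernel-verified Lean document; each statement's English description precedes it below -/
import Mathlib

section
/- For all M>0 and p,K ∈ ℕ, and every continuous map φ : ℝ^p → ℝ^K, the average absolute error (1/(2M)^{2p}) ∫∫_{[-M,M]^p × [-M,M]^p} | -‖x - x'‖² - ⟨φ(x), φ(x')⟩ | dx dx' is at least 2pM²/3. In particular, no inner product of continuous feature maps can approximate the negative squared distance similarity on [-M,M]^p arbitrarily well in L¹ average. -/
open MeasureTheory
open scoped RealInnerProductSpace

/-- The cube `[-M, M]^p` in Euclidean space. -/
def cube (p : ℕ) (M : ℝ) : Set (EuclideanSpace ℝ (Fin p)) :=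
  {x | ∀ i, x i ∈ Set.Icc (-M) M}

section Aux

variable (M : ℝ) (p : ℕ)

lemma cube_preimage :
    (MeasurableEquiv.toLp 2 (Fin p → ℝ)).symm.symm ⁻¹' cube p M
      = Set.pi Set.univ (fun _ : Fin p => Set.Icc (-M) M) := by
  ext x
  simp only [Set.mem_preimage, cube, Set.mem_setOf_eq, Set.mem_pi, Set.mem_univ, true_imp_iff]
  constructor <;> intro h i <;> exact h i

lemma measurableSet_cube : MeasurableSet (cube p M) := by
  have : cube p M = ⋂ i, (fun x : EuclideanSpace ℝ (Fin p) => x i) ⁻¹' Set.Icc (-M) M := by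
    ext x; simp [cube]
  rw [this]
  exact MeasurableSet.iInter fun i =>
    ((EuclideanSpace.proj i : EuclideanSpace ℝ (Fin p) →L[ℝ] ℝ).continuous.measurable)
      measurableSet_Icc

lemma isCompact_cube : IsCompact (cube p M) := by
  have h : cube p M =
      (EuclideanSpace.equiv (Fin p) ℝ).toHomeomorph.symm ''
        Set.pi Set.univ (fun _ : Fin p => Set.Icc (-M) M) := by
    ext x
    simp only [cube, Set.mem_setOf_eq]
    constructor
    · intro hx
      refine ⟨fun i => x i, fun i _ => hx i, rfl⟩
    · rintro ⟨y, hy, rfl⟩ i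
      exact hy i (Set.mem_univ i)
  rw [h]
  exact (isCompact_univ_pi fun i => isCompact_Icc).image
    (EuclideanSpace.equiv (Fin p) ℝ).toHomeomorph.symm.continuous

lemma volume_cube : volume (cube p M) = ENNReal.ofReal (2*M) ^ p := by
  rw [← MeasurePreserving.measure_preimage
      (EuclideanSpace.volume_preserving_symm_measurableEquiv_toLp (Fin p)).symm
      (measurableSet_cube M p).nullMeasurableSet,
    cube_preimage, volume_pi_pi]
  simp only [Real.volume_Icc, Finset.prod_const, Finset.card_univ, Fintype.card_fin]
  norm_num
  ring_nf
  rw [ENNReal.ofReal_mul' (by norm_num), mul_pow, ENNReal.ofReal_ofNat]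

variable (hM : 0 < M)
include hM

lemma cube_marginal (g : ℝ → ℝ) (i : Fin p) :
    ∫ x in cube p M, g (x i) = (∫ t in Set.Icc (-M) M, g t) * (2*M)^(p-1) := by
  rw [← MeasurePreserving.setIntegral_preimage_emb
      (EuclideanSpace.volume_preserving_symm_measurableEquiv_toLp (Fin p)).symm
      (MeasurableEquiv.measurableEmbedding _) (fun y => g (y i)) (cube p M)]
  rw [cube_preimage]
  have hind : ∀ x : Fin p → ℝ,
      (Set.pi Set.univ (fun _ : Fin p => Set.Icc (-M) M)).indicator
        (fun x => g (((MeasurableEquiv.toLp 2 (Fin p → ℝ)).symm.symm x :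
          EuclideanSpace ℝ (Fin p)) i)) x
      = ∏ j, (if j = i then (Set.Icc (-M) M).indicator g else
          (Set.Icc (-M) M).indicator (fun _ => (1:ℝ))) (x j) := by
    intro x
    by_cases hx : x ∈ Set.pi Set.univ (fun _ : Fin p => Set.Icc (-M) M)
    · rw [Set.indicator_of_mem hx]
      have : ∀ j, (if j = i then (Set.Icc (-M) M).indicator g else
          (Set.Icc (-M) M).indicator (fun _ => (1:ℝ))) (x j)
          = if j = i then g (x j) else 1 := by
        intro j
        by_cases hj : j = i <;>
          simp [hj, Set.indicator_of_mem (hx _ (Set.mem_univ _))]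
      simp only [this]
      rw [Finset.prod_ite_eq' Finset.univ i (fun j => g (x j))]
      simp [MeasurableEquiv.symm_symm, MeasurableEquiv.coe_toLp]
    · rw [Set.indicator_of_notMem hx]
      simp only [Set.mem_pi, Set.mem_univ, true_imp_iff, not_forall] at hx
      obtain ⟨j, hj⟩ := hx
      refine (Finset.prod_eq_zero (Finset.mem_univ j) ?_).symm
      rcases eq_or_ne j i with h | h
      · rw [if_pos h, Set.indicator_of_notMem hj]
      · rw [if_neg h, Set.indicator_of_notMem hj]
  rw [← integral_indicator (MeasurableSet.univ_pi fun _ => measurableSet_Icc)]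
  simp_rw [hind]
  rw [MeasureTheory.volume_pi (α := fun _ : Fin p => ℝ), MeasureTheory.integral_fintype_prod_eq_prod (ι := Fin p)
      (f := fun j => (if j = i then (Set.Icc (-M) M).indicator g else
          (Set.Icc (-M) M).indicator (fun _ => (1:ℝ))))]
  rw [← Finset.mul_prod_erase Finset.univ _ (Finset.mem_univ i)]
  simp only [if_pos rfl, eq_self_iff_true, if_true]
  rw [integral_indicator measurableSet_Icc]
  congr 1
  rw [Finset.prod_congr rfl (fun j hj => by
    rw [if_neg (Finset.ne_of_mem_erase hj)]), Finset.prod_const,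
    Finset.card_erase_of_mem (Finset.mem_univ i), Finset.card_univ, Fintype.card_fin]
  congr 1
  rw [integral_indicator measurableSet_Icc]
  simp only [Real.volume_Icc, setIntegral_const, smul_eq_mul, mul_one]
  rw [measureReal_def, Real.volume_Icc, ENNReal.toReal_ofReal (by linarith : (0:ℝ) ≤ M - -M)]
  ring

lemma icc_int_id : ∫ t in Set.Icc (-M) M, t = 0 := by
  rw [MeasureTheory.integral_Icc_eq_integral_Ioc,
    ← intervalIntegral.integral_of_le (by linarith)]
  simp [integral_id]

lemma icc_int_sq : ∫ t in Set.Icc (-M) M, t^2 = 2/3 * M^3 := by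
  rw [MeasureTheory.integral_Icc_eq_integral_Ioc,
    ← intervalIntegral.integral_of_le (by linarith)]
  rw [integral_pow]
  ring

lemma cube_int_coord (i : Fin p) : ∫ x in cube p M, x i = 0 := by
  rw [cube_marginal M p hM (fun t => t) i, icc_int_id M hM, zero_mul]

lemma cube_int_coord_sq (i : Fin p) :
    ∫ x in cube p M, (x i)^2 = 2/3 * M^3 * (2*M)^(p-1) := by
  rw [cube_marginal M p hM (fun t => t^2) i, icc_int_sq M hM]

lemma volume_cube_toReal : (volume (cube p M)).toReal = (2*M)^p := by
  rw [volume_cube, ENNReal.toReal_pow, ENNReal.toReal_ofReal (by linarith)]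

lemma cube_int_normsq :
    ∫ x in cube p M, ‖x‖^2 = (p * M^2 / 3) * (2*M)^p := by
  have hsum : ∀ x : EuclideanSpace ℝ (Fin p), ‖x‖^2 = ∑ i, (x i)^2 := by
    intro x
    rw [EuclideanSpace.norm_eq, Real.sq_sqrt (by positivity)]
    exact Finset.sum_congr rfl fun i _ => by rw [Real.norm_eq_abs, sq_abs]
  simp_rw [hsum]
  rw [integral_finset_sum]
  · simp_rw [cube_int_coord_sq M p hM]
    rw [Finset.sum_const, Finset.card_univ, Fintype.card_fin, nsmul_eq_mul]
    cases p with
    | zero => simp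
    | succ n =>
      simp only [Nat.add_sub_cancel, pow_succ]
      push_cast
      ring
  · intro i _
    exact (((EuclideanSpace.proj (𝕜 := ℝ) i).continuous.pow 2).continuousOn).integrableOn_compact
      (isCompact_cube M p)

lemma cube_int_id :
    ∫ x in cube p M, x = (0 : EuclideanSpace ℝ (Fin p)) := by
  have hint : IntegrableOn (fun x : EuclideanSpace ℝ (Fin p) => x) (cube p M) volume :=
    continuous_id.continuousOn.integrableOn_compact (isCompact_cube M p)
  ext i
  have h1 := (EuclideanSpace.proj (𝕜 := ℝ) i).integral_comp_comm hint
  have h2 : (EuclideanSpace.proj (𝕜 := ℝ) i) (∫ x in cube p M, x) = 0 := by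
    rw [← h1]
    simpa using cube_int_coord M p hM i
  simpa using h2

end Aux

/-- No inner product of continuous feature maps can approximate the negative squared
distance similarity on `[-M,M]^p` with average L¹ error below `2pM²/3`. -/
theorem ips_nsd_lower_bound (M : ℝ) (hM : 0 < M) (p K : ℕ)
    (φ : EuclideanSpace ℝ (Fin p) → EuclideanSpace ℝ (Fin K)) (hφ : Continuous φ) :
    2 * p * M ^ 2 / 3 ≤
      (1 / (2 * M) ^ (2 * p)) *
        ∫ x in cube p M, ∫ x' in cube p M,
          |(-‖x - x'‖ ^ 2) - ⟪φ x, φ x'⟫| := by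
  have hCc : IsCompact (cube p M) := isCompact_cube M p
  set μ : Measure (EuclideanSpace ℝ (Fin p)) := volume.restrict (cube p M) with hμdef
  haveI : IsFiniteMeasure μ := by
    constructor
    rw [hμdef, Measure.restrict_apply_univ]
    exact hCc.measure_lt_top
  -- continuity facts
  have hd : Continuous fun z : EuclideanSpace ℝ (Fin p) × EuclideanSpace ℝ (Fin p) =>
      ⟪φ z.1, φ z.2⟫ :=
    Continuous.inner (hφ.comp continuous_fst) (hφ.comp continuous_snd)
  have hc : Continuous fun z : EuclideanSpace ℝ (Fin p) × EuclideanSpace ℝ (Fin p) =>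
      ‖z.1 - z.2‖^2 :=
    (continuous_fst.sub continuous_snd).norm.pow 2
  have hA : Continuous fun z : EuclideanSpace ℝ (Fin p) × EuclideanSpace ℝ (Fin p) =>
      |(-‖z.1 - z.2‖ ^ 2) - ⟪φ z.1, φ z.2⟫| := (hc.neg.sub hd).abs
  have hB : Continuous fun z : EuclideanSpace ℝ (Fin p) × EuclideanSpace ℝ (Fin p) =>
      ‖z.1 - z.2‖^2 + ⟪φ z.1, φ z.2⟫ := hc.add hd
  -- integrability on the product
  have hprod : ∀ {f : EuclideanSpace ℝ (Fin p) × EuclideanSpace ℝ (Fin p) → ℝ},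
      Continuous f → Integrable f (μ.prod μ) := by
    intro f hf
    rw [hμdef, Measure.prod_restrict, ← Measure.volume_eq_prod]
    exact hf.continuousOn.integrableOn_compact (hCc.prod hCc)
  have hint1 : ∀ {f : EuclideanSpace ℝ (Fin p) → ℝ}, Continuous f → Integrable f μ :=
    fun hf => hf.continuousOn.integrableOn_compact hCc
  have hφint : Integrable φ μ := hφ.continuousOn.integrableOn_compact hCc
  have hidint : Integrable (fun x : EuclideanSpace ℝ (Fin p) => x) μ :=
    continuous_id.continuousOn.integrableOn_compact hCc
  set Vr : ℝ := (2*M)^p with hVr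
  have hVrpos : 0 < Vr := by positivity
  have hμu : (μ Set.univ).toReal = Vr := by
    rw [hμdef, Measure.restrict_apply_univ, volume_cube_toReal M p hM]
  set S : ℝ := ((p : ℝ) * M^2 / 3) * Vr with hS
  -- pointwise continuity in second variable
  have hcx : ∀ x : EuclideanSpace ℝ (Fin p),
      Continuous fun x' : EuclideanSpace ℝ (Fin p) => ‖x - x'‖^2 :=
    fun x => (continuous_const.sub continuous_id).norm.pow 2
  have hdx : ∀ x : EuclideanSpace ℝ (Fin p),
      Continuous fun x' : EuclideanSpace ℝ (Fin p) => ⟪φ x, φ x'⟫ :=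
    fun x => Continuous.inner continuous_const hφ
  -- Step 1: the monotonicity bound
  have step1 : ∫ x, (∫ x', (‖x - x'‖^2 + ⟪φ x, φ x'⟫) ∂μ) ∂μ
      ≤ ∫ x, (∫ x', |(-‖x - x'‖ ^ 2) - ⟪φ x, φ x'⟫| ∂μ) ∂μ := by
    refine integral_mono ((hprod hB).integral_prod_left) ((hprod hA).integral_prod_left) ?_
    intro x
    refine integral_mono (hint1 ((hcx x).add (hdx x))) (hint1 (((hcx x).neg.sub (hdx x)).abs)) ?_
    intro x'
    have h := neg_le_abs ((-‖x - x'‖ ^ 2) - ⟪φ x, φ x'⟫)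
    dsimp only
    linarith
  -- Step 2: split the lower integrand
  have step2 : ∫ x, (∫ x', (‖x - x'‖^2 + ⟪φ x, φ x'⟫) ∂μ) ∂μ
      = (∫ x, (∫ x', ‖x - x'‖^2 ∂μ) ∂μ) + ∫ x, (∫ x', ⟪φ x, φ x'⟫ ∂μ) ∂μ := by
    have h1 : ∀ x : EuclideanSpace ℝ (Fin p),
        ∫ x', (‖x - x'‖^2 + ⟪φ x, φ x'⟫) ∂μ
          = (∫ x', ‖x - x'‖^2 ∂μ) + ∫ x', ⟪φ x, φ x'⟫ ∂μ :=
      fun x => integral_add (hint1 (hcx x)) (hint1 (hdx x))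
    simp_rw [h1]
    exact integral_add ((hprod hc).integral_prod_left) ((hprod hd).integral_prod_left)
  -- Step 3: the inner-product double integral is nonnegative
  have step3 : 0 ≤ ∫ x, (∫ x', ⟪φ x, φ x'⟫ ∂μ) ∂μ := by
    have h1 : ∀ x : EuclideanSpace ℝ (Fin p),
        ∫ x', ⟪φ x, φ x'⟫ ∂μ = ⟪φ x, ∫ y, φ y ∂μ⟫ := fun x => integral_inner hφint (φ x)
    simp_rw [h1]
    have h2 : ∀ x, ⟪φ x, ∫ y, φ y ∂μ⟫ = ⟪∫ y, φ y ∂μ, φ x⟫ := fun x => real_inner_comm _ _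
    simp_rw [h2]
    rw [integral_inner hφint]
    exact real_inner_self_nonneg
  -- Step 4: the squared-distance double integral
  have step4 : ∫ x, (∫ x', ‖x - x'‖^2 ∂μ) ∂μ = 2 * Vr * S := by
    have h1 : ∀ x : EuclideanSpace ℝ (Fin p),
        ∫ x', ‖x - x'‖^2 ∂μ = Vr * ‖x‖^2 + S := by
      intro x
      have e1 : ∀ x' : EuclideanSpace ℝ (Fin p),
          ‖x - x'‖^2 = (‖x‖^2 - 2*⟪x,x'⟫) + ‖x'‖^2 := fun x' => by
        rw [norm_sub_sq_real]
      simp_rw [e1]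
      have hinn : Integrable (fun x' : EuclideanSpace ℝ (Fin p) => ⟪x, x'⟫) μ :=
        hint1 (Continuous.inner continuous_const continuous_id)
      have hnsq : Integrable (fun x' : EuclideanSpace ℝ (Fin p) => ‖x'‖^2) μ :=
        hint1 (continuous_norm.pow 2)
      have i1 : ∫ x', (‖x‖^2 - 2*⟪x,x'⟫ + ‖x'‖^2) ∂μ
          = (∫ x', (‖x‖^2 - 2*⟪x,x'⟫) ∂μ) + ∫ x', ‖x'‖^2 ∂μ :=
        integral_add ((integrable_const _).sub (hinn.const_mul 2)) hnsq
      have i2 : ∫ x', (‖x‖^2 - 2*⟪x,x'⟫) ∂μ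
          = (∫ _x' : EuclideanSpace ℝ (Fin p), ‖x‖^2 ∂μ) - ∫ x', 2*⟪x,x'⟫ ∂μ :=
        integral_sub (integrable_const _) (hinn.const_mul 2)
      have i3 : ∫ x', 2*⟪x,x'⟫ ∂μ = 2 * ∫ x', ⟪x,x'⟫ ∂μ := by
        simpa [smul_eq_mul] using integral_smul (2:ℝ) (fun x' : EuclideanSpace ℝ (Fin p) => ⟪x,x'⟫)
      have i4 : ∫ x', ⟪x,x'⟫ ∂μ = 0 := by
        rw [integral_inner hidint, cube_int_id M p hM, inner_zero_right]
      rw [i1, i2, i3, i4, integral_const, measureReal_def, hμu, smul_eq_mul, cube_int_normsq M p hM]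
      simp only [← hVr, ← hS]
      ring
    simp_rw [h1]
    have j1 : ∫ x, (Vr * ‖x‖^2 + S) ∂μ = (∫ x, Vr * ‖x‖^2 ∂μ) + ∫ _x, S ∂μ :=
      integral_add ((hint1 (continuous_norm.pow 2)).const_mul Vr) (integrable_const _)
    have j2 : ∫ x, Vr * ‖x‖^2 ∂μ = Vr * ∫ x, ‖x‖^2 ∂μ := by
      simpa [smul_eq_mul] using
        integral_smul Vr (fun x : EuclideanSpace ℝ (Fin p) => ‖x‖^2)
    rw [j1, j2, cube_int_normsq M p hM, integral_const, measureReal_def, hμu, smul_eq_mul]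
    simp only [← hVr, ← hS]
    ring
  -- assemble
  have key : (2 * (p:ℝ) * M^2/3) * Vr^2
      ≤ ∫ x, (∫ x', |(-‖x - x'‖ ^ 2) - ⟪φ x, φ x'⟫| ∂μ) ∂μ := by
    calc (2 * (p:ℝ) * M^2/3) * Vr^2 = 2 * Vr * S := by rw [hS]; ring
    _ ≤ 2 * Vr * S + ∫ x, (∫ x', ⟪φ x, φ x'⟫ ∂μ) ∂μ := le_add_of_nonneg_right step3
    _ = ∫ x, (∫ x', (‖x - x'‖^2 + ⟪φ x, φ x'⟫) ∂μ) ∂μ := by rw [step2, step4]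
    _ ≤ _ := step1
  have hpow : (2*M)^(2*p) = Vr^2 := by rw [hVr, mul_comm 2 p, pow_mul]
  rw [hpow, one_div, inv_mul_eq_div, le_div_iff₀ (by positivity)]
  calc 2 * (p:ℝ) * M ^ 2 / 3 * Vr ^ 2 = (2 * (p:ℝ) * M^2/3) * Vr^2 := by ring
  _ ≤ _ := key
end

section
/- (Representation theorem for SIPS) Let Y ⊂ ℝ^{K*} be a set, f* : [-M,M]^p → Y continuous, and g* : Y × Y → ℝ a conditionally positive definite kernel such that g*(f*(·), f*(·)) is continuous. Suppose the following universal approximation property holds: for every PD kernel g₀ on Y × Y with g₀(f*(·),f*(·)) continuous and every ε > 0 there exists a continuous map F : [-M,M]^p → ℝ^K (for some K) with |g₀(f*(x),f*(x')) − ⟨F(x),F(x')⟩| < ε for all x, x'; and for every continuous r : [-M,M]^p → ℝ and ε > 0 there is a function U in the approximating class with sup|r − U| < ε. Then for every ε > 0 there exist K, a continuous map F : [-M,M]^p → ℝ^K and a function U : [-M,M]^p → ℝ in the respective approximating classes such that |g*(f*(x), f*(x')) − (⟨F(x), F(x')⟩ + U(x) + U(x'))| < ε for all x, x' ∈ [-M,M]^p.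 -/
open scoped RealInnerProductSpace

/-- A kernel `g` is positive definite (PD) on a subset `Y`. -/
def IsPDKernelOn {E : Type*} (Y : Set E) (g : E → E → ℝ) : Prop :=
  ∀ (n : ℕ) (c : Fin n → ℝ) (y : Fin n → E), (∀ i, y i ∈ Y) →
    0 ≤ ∑ i, ∑ j, c i * c j * g (y i) (y j)

/-- A kernel `g` is conditionally positive definite (CPD) on a subset `Y`. -/
def IsCPDKernelOn {E : Type*} (Y : Set E) (g : E → E → ℝ) : Prop :=
  ∀ (n : ℕ) (c : Fin n → ℝ) (y : Fin n → E), (∀ i, y i ∈ Y) → (∑ i, c i) = 0 →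
    0 ≤ ∑ i, ∑ j, c i * c j * g (y i) (y j)

lemma double_sum_expand (n : ℕ) (c : Fin n → ℝ) (A : Fin n → Fin n → ℝ)
    (B C : Fin n → ℝ) (D : ℝ) :
    ∑ i, ∑ j, c i * c j * (A i j - B i - C j + D)
      = (∑ i, ∑ j, c i * c j * A i j) - (∑ i, c i * B i) * (∑ j, c j)
        - (∑ i, c i) * (∑ j, c j * C j) + (∑ i, c i) * (∑ j, c j) * D := by
  simp only [mul_sub, mul_add, sub_mul, add_mul, Finset.sum_sub_distrib,
    Finset.sum_add_distrib, ← Finset.sum_mul, ← Finset.mul_sum]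
  ring_nf
  have h1 : ∑ x : Fin n, (c x * ∑ i, c i) * B x = (∑ i, c i) * ∑ x, c x * B x := by
    rw [Finset.mul_sum]; exact Finset.sum_congr rfl fun x _ => by ring
  have h2 : ∑ x : Fin n, ∑ y : Fin n, c x * c y * C y
      = (∑ i, c i) * ∑ y, c y * C y := by
    rw [Finset.sum_mul]
    exact Finset.sum_congr rfl fun x _ => by
      rw [Finset.mul_sum]; exact Finset.sum_congr rfl fun y _ => by ring
  rw [h1, h2]
  ring

/-- Berg's lemma, one direction: if `g` is CPD then the shifted kernel is PD. -/
lemma berg_pd {E : Type*} (Y : Set E) (g : E → E → ℝ) (hg : IsCPDKernelOn Y g)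
    (y₀ : E) (hy₀ : y₀ ∈ Y) :
    IsPDKernelOn Y (fun y y' => g y y' - g y y₀ - g y₀ y' + g y₀ y₀) := by
  intro n c y hy
  set s : ℝ := ∑ i, c i with hs
  have key := hg (n + 1) (Fin.snoc c (-s)) (Fin.snoc y y₀)
    (fun i => by
      induction i using Fin.lastCases with
      | last => simpa using hy₀
      | cast i => simpa using hy i)
    (by simp [Fin.sum_univ_castSucc, hs])
  have expand : ∑ i, ∑ j, (Fin.snoc c (-s) : Fin (n+1) → ℝ) i *
        (Fin.snoc c (-s) : Fin (n+1) → ℝ) j *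
        g ((Fin.snoc y y₀ : Fin (n+1) → E) i) ((Fin.snoc y y₀ : Fin (n+1) → E) j)
      = ∑ i, ∑ j, c i * c j * (g (y i) (y j) - g (y i) y₀ - g y₀ (y j) + g y₀ y₀) := by
    rw [double_sum_expand]
    simp only [Fin.sum_univ_castSucc, Fin.snoc_castSucc, Fin.snoc_last]
    ring_nf
    have e1 : ∑ x : Fin n, -(c x * s * g (y x) y₀)
        = -(s * ∑ i, c i * g (y i) y₀) := by
      rw [Finset.mul_sum, ← Finset.sum_neg_distrib]
      exact Finset.sum_congr rfl fun _ _ => by ring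
    have e2 : ∑ x : Fin n, -(s * c x * g y₀ (y x))
        = -(s * ∑ j, c j * g y₀ (y j)) := by
      have h : ∀ x : Fin n, -(s * c x * g y₀ (y x)) = -(s * (c x * g y₀ (y x))) :=
        fun x => by ring
      rw [Finset.sum_congr rfl fun x _ => h x, Finset.sum_neg_distrib, ← Finset.mul_sum]
    rw [Finset.sum_add_distrib, e1, e2]
    ring
  calc (0:ℝ) ≤ _ := key
    _ = _ := expand


/-- Representation theorem for SIPS: if inner products of continuous feature maps can
approximate every PD similarity on the cube, and the class `𝒰` can uniformly approximate
every continuous function on the cube, then the shifted inner product similarity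
`⟨F(x),F(x')⟩ + U(x) + U(x')` approximates any CPD similarity arbitrarily well. -/
theorem sips_representation (p Kstar : ℕ) (M : ℝ) (hM : 0 < M)
    (Y : Set (EuclideanSpace ℝ (Fin Kstar)))
    (fstar : EuclideanSpace ℝ (Fin p) → EuclideanSpace ℝ (Fin Kstar))
    (hfmem : ∀ x ∈ cube p M, fstar x ∈ Y)
    (hfcont : ContinuousOn fstar (cube p M))
    (gstar : EuclideanSpace ℝ (Fin Kstar) → EuclideanSpace ℝ (Fin Kstar) → ℝ)
    (hgsym : ∀ y y', gstar y y' = gstar y' y)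
    (hgcpd : IsCPDKernelOn Y gstar)
    (hgcont : ContinuousOn (fun q : EuclideanSpace ℝ (Fin p) × EuclideanSpace ℝ (Fin p) =>
      gstar (fstar q.1) (fstar q.2)) (cube p M ×ˢ cube p M))
    (𝒰 : Set (EuclideanSpace ℝ (Fin p) → ℝ))
    (hUAT_F : ∀ g₀ : EuclideanSpace ℝ (Fin Kstar) → EuclideanSpace ℝ (Fin Kstar) → ℝ,
      IsPDKernelOn Y g₀ →
      ContinuousOn (fun q : EuclideanSpace ℝ (Fin p) × EuclideanSpace ℝ (Fin p) =>
        g₀ (fstar q.1) (fstar q.2)) (cube p M ×ˢ cube p M) →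
      ∀ ε > 0, ∃ (K : ℕ) (F : EuclideanSpace ℝ (Fin p) → EuclideanSpace ℝ (Fin K)),
        Continuous F ∧ ∀ x ∈ cube p M, ∀ x' ∈ cube p M,
          |g₀ (fstar x) (fstar x') - ⟪F x, F x'⟫| < ε)
    (hUAT_U : ∀ r : EuclideanSpace ℝ (Fin p) → ℝ, ContinuousOn r (cube p M) →
      ∀ ε > 0, ∃ U ∈ 𝒰, ∀ x ∈ cube p M, |r x - U x| < ε) :
    ∀ ε > 0, ∃ (K : ℕ) (F : EuclideanSpace ℝ (Fin p) → EuclideanSpace ℝ (Fin K))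
      (U : EuclideanSpace ℝ (Fin p) → ℝ), Continuous F ∧ U ∈ 𝒰 ∧
        ∀ x ∈ cube p M, ∀ x' ∈ cube p M,
          |gstar (fstar x) (fstar x') - (⟪F x, F x'⟫ + U x + U x')| < ε := by
  intro ε hε
  set x₀ : EuclideanSpace ℝ (Fin p) := 0 with hx₀def
  have hx₀ : x₀ ∈ cube p M := by
    intro i
    simp only [hx₀def]
    constructor <;> simp <;> linarith
  set y₀ := fstar x₀ with hy₀def
  have hy₀ : y₀ ∈ Y := hfmem _ hx₀
  set g₀ : EuclideanSpace ℝ (Fin Kstar) → EuclideanSpace ℝ (Fin Kstar) → ℝ :=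
    fun y y' => gstar y y' - gstar y y₀ - gstar y₀ y' + gstar y₀ y₀ with hg₀def
  have hpd : IsPDKernelOn Y g₀ := berg_pd Y gstar hgcpd y₀ hy₀
  have hc1 : ContinuousOn (fun q : EuclideanSpace ℝ (Fin p) × EuclideanSpace ℝ (Fin p) =>
      gstar (fstar q.1) (fstar x₀)) (cube p M ×ˢ cube p M) :=
    hgcont.comp ((continuous_fst.prodMk continuous_const).continuousOn)
      (fun q hq => Set.mk_mem_prod hq.1 hx₀)
  have hc2 : ContinuousOn (fun q : EuclideanSpace ℝ (Fin p) × EuclideanSpace ℝ (Fin p) =>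
      gstar (fstar x₀) (fstar q.2)) (cube p M ×ˢ cube p M) :=
    hgcont.comp ((continuous_const.prodMk continuous_snd).continuousOn)
      (fun q hq => Set.mk_mem_prod hx₀ hq.2)
  have hG₀cont : ContinuousOn (fun q : EuclideanSpace ℝ (Fin p) × EuclideanSpace ℝ (Fin p) =>
      g₀ (fstar q.1) (fstar q.2)) (cube p M ×ˢ cube p M) := by
    simp only [hg₀def, hy₀def]
    exact ((hgcont.sub hc1).sub hc2).add continuousOn_const
  set r : EuclideanSpace ℝ (Fin p) → ℝ :=
    fun x => gstar (fstar x) y₀ - gstar y₀ y₀ / 2 with hrdef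
  have hrcont : ContinuousOn r (cube p M) := by
    simp only [hrdef, hy₀def]
    exact (hgcont.comp ((continuous_id.prodMk continuous_const).continuousOn)
      (fun x hx => Set.mk_mem_prod hx hx₀)).sub continuousOn_const
  obtain ⟨K, F, hFc, hF⟩ := hUAT_F g₀ hpd hG₀cont (ε / 2) (by linarith)
  obtain ⟨U, hU𝒰, hU⟩ := hUAT_U r hrcont (ε / 4) (by linarith)
  refine ⟨K, F, U, hFc, hU𝒰, ?_⟩
  intro x hx x' hx'
  have hdecomp : gstar (fstar x) (fstar x') = g₀ (fstar x) (fstar x') + r x + r x' := by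
    simp only [hg₀def, hrdef]
    rw [hgsym y₀ (fstar x')]
    ring
  have h1 := hF x hx x' hx'
  have h2 := hU x hx
  have h3 := hU x' hx'
  have heq : gstar (fstar x) (fstar x') - (⟪F x, F x'⟫ + U x + U x')
      = (g₀ (fstar x) (fstar x') - ⟪F x, F x'⟫) + (r x - U x) + (r x' - U x') := by
    rw [hdecomp]; ring
  rw [heq]
  calc |(g₀ (fstar x) (fstar x') - ⟪F x, F x'⟫) + (r x - U x) + (r x' - U x')|
      ≤ |(g₀ (fstar x) (fstar x') - ⟪F x, F x'⟫) + (r x - U x)| + |r x' - U x'| := abs_add_le _ _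
    _ ≤ |g₀ (fstar x) (fstar x') - ⟪F x, F x'⟫| + |r x - U x| + |r x' - U x'| := by
        have := abs_add_le (g₀ (fstar x) (fstar x') - ⟪F x, F x'⟫) (r x - U x)
        linarith
    _ < ε := by linarith
end

section
/- The negative Jeffrey's divergence −d_Jeff is not conditionally positive definite on the set of 2-variate normal distributions: with c₁ = −2/5, c₂ = −3/5, c₃ = 1 (so ∑ c_i = 0) and y_i = N₂(μ_i, Σ_i) where μ₁ = (2,1), μ₂ = (−1,1), μ₃ = (1,2), Σ₁ = diag(1/10, 1), Σ₂ = diag(1/2, 1), Σ₃ = diag(1, 1), one has ∑_{i,j} c_i c_j (−d_Jeff(y_i, y_j)) < 0. -/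
open Matrix

/-- Kullback–Leibler divergence between two `q`-variate normal distributions
`N(μ, S)` and `N(μ', S')` (closed form). -/
noncomputable def gaussKL (q : ℕ) (μ μ' : Fin q → ℝ) (S S' : Matrix (Fin q) (Fin q) ℝ) : ℝ :=
  (1 / 2) * ((S'⁻¹ * S).trace + (μ' - μ) ⬝ᵥ (S'⁻¹ *ᵥ (μ' - μ)) - q +
    Real.log (S'.det / S.det))

/-- Jeffrey's divergence between two `q`-variate normal distributions. -/
noncomputable def gaussJeff (q : ℕ) (μ μ' : Fin q → ℝ) (S S' : Matrix (Fin q) (Fin q) ℝ) : ℝ :=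
  gaussKL q μ μ' S S' + gaussKL q μ' μ S' S


lemma kl_diag (a b a' b' : ℝ) (ha' : a' ≠ 0) (hb' : b' ≠ 0) (μ μ' : Fin 2 → ℝ) :
    gaussKL 2 μ μ' (Matrix.diagonal ![a,b]) (Matrix.diagonal ![a',b']) =
    (1/2)*(a/a' + b/b' + (μ' 0 - μ 0)^2/a' + (μ' 1 - μ 1)^2/b' - 2 +
      Real.log ((a'*b')/(a*b))) := by
  have hinv : (Matrix.diagonal ![a',b'])⁻¹ = Matrix.diagonal ![a'⁻¹, b'⁻¹] := by
    apply Matrix.inv_eq_right_inv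
    rw [Matrix.diagonal_mul_diagonal]
    have : ((fun i => ![a', b'] i * ![a'⁻¹, b'⁻¹] i) : Fin 2 → ℝ) = 1 := by
      funext i; fin_cases i <;> simp [mul_inv_cancel₀, ha', hb']
    rw [this]; exact Matrix.diagonal_one
  rw [gaussKL, hinv]
  simp [Matrix.trace_fin_two, Matrix.det_fin_two, Matrix.mulVec, dotProduct,
    Fin.sum_univ_two, Matrix.diagonal_apply, Matrix.mul_apply]
  ring_nf

lemma jeff_diag (a b a' b' : ℝ) (ha : a ≠ 0) (hb : b ≠ 0) (ha' : a' ≠ 0) (hb' : b' ≠ 0)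
    (μ μ' : Fin 2 → ℝ) :
    gaussJeff 2 μ μ' (Matrix.diagonal ![a,b]) (Matrix.diagonal ![a',b']) =
    (1/2)*(a/a' + a'/a + b/b' + b'/b + (μ' 0 - μ 0)^2*(1/a' + 1/a) +
      (μ' 1 - μ 1)^2*(1/b' + 1/b) - 4) := by
  rw [gaussJeff, kl_diag a b a' b' ha' hb', kl_diag a' b' a b ha hb]
  have h1 : (a*b)/(a'*b') = ((a'*b')/(a*b))⁻¹ := by rw [inv_div]
  rw [h1, Real.log_inv]
  have h2 : (μ 0 - μ' 0)^2 = (μ' 0 - μ 0)^2 := by ring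
  have h3 : (μ 1 - μ' 1)^2 = (μ' 1 - μ 1)^2 := by ring
  rw [h2, h3]
  field_simp
  ring

/-- The negative Jeffrey's divergence is not CPD on 2-variate normal distributions:
an explicit counterexample with coefficients summing to zero. -/
theorem neg_jeffreys_not_cpd :
    ∃ (c : Fin 3 → ℝ) (μ : Fin 3 → Fin 2 → ℝ) (Sig : Fin 3 → Matrix (Fin 2) (Fin 2) ℝ),
      c = ![-2/5, -3/5, 1] ∧
      μ = ![![2, 1], ![-1, 1], ![1, 2]] ∧
      Sig = ![Matrix.diagonal ![1/10, 1], Matrix.diagonal ![1/2, 1],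
             Matrix.diagonal ![1, 1]] ∧
      (∑ i, c i) = 0 ∧
      ∑ i, ∑ j, c i * c j * (-(gaussJeff 2 (μ i) (μ j) (Sig i) (Sig j))) < 0 := by
  refine ⟨_, _, _, rfl, rfl, rfl, by norm_num [Fin.sum_univ_three, Matrix.cons_val_two, Matrix.tail_cons, Matrix.head_cons], ?_⟩
  norm_num [Fin.sum_univ_three, jeff_diag, Matrix.cons_val_two, Matrix.tail_cons, Matrix.head_cons]
end
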